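/- For every positive integer n and every real x > 0 with x ≠ 1, the n-th derivative of the function x ↦ 1/ln(x) is given by (1/ln x)^{(n)} = (1/x^n) · Σ_{k=1}^{n} (−1)^k k! · s(n,k) · (1/ln x)^{k+1}, where s(n,k) are the signed Stirling numbers of the first kind. -/

import Mathlib

/-- Signed Stirling numbers of the first kind, defined by `s(0,0)=1`,
`s(n,0)=0` for `n ≥ 1`, `s(0,k)=0` for `k ≥ 1`, and
`s(n+1,k+1) = s(n,k) - n·s(n,k+1)`. -/
def stirling1 : ℕ → ℕ → ℤ
  | 0, 0 => 1
  | 0, _ + 1 => 0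
  | _ + 1, 0 => 0
  | n + 1, k + 1 => stirling1 n k - (n : ℤ) * stirling1 n (k + 1)

lemma stirling1_succ_zero (n : ℕ) : stirling1 (n+1) 0 = 0 := by simp [stirling1]

lemma stirling1_of_lt : ∀ n k : ℕ, n < k → stirling1 n k = 0 := by
  intro n
  induction n with
  | zero => intro k hk; match k, hk with | k+1, _ => simp [stirling1]
  | succ n ih =>
    intro k hk
    match k, hk with
    | k+1, hk =>
      have h1 : n < k := by omega
      have h2 : n < k + 1 := by omega
      simp [stirling1, ih _ h1, ih _ h2]

noncomputable def C (n k : ℕ) : ℝ := (-1)^k * (Nat.factorial k : ℝ) * (stirling1 n k : ℝ)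

lemma C_succ_zero (n : ℕ) : C (n+1) 0 = 0 := by simp [C, stirling1_succ_zero]

lemma C_of_lt (n k : ℕ) (h : n < k) : C n k = 0 := by simp [C, stirling1_of_lt n k h]

lemma C_succ_succ (n k : ℕ) : C (n+1) (k+1) = -((k:ℝ)+1) * C n k - (n:ℝ) * C n (k+1) := by
  simp only [C, stirling1, Nat.factorial_succ]
  push_cast
  ring

lemma sum_id (n : ℕ) (hn : 1 ≤ n) (L : ℝ) :
    ∑ k ∈ Finset.range (n+2), C (n+1) k * L^(k+1)
      = ∑ k ∈ Finset.range (n+1), (-(n:ℝ)) * C n k * L^(k+1)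
        + ∑ k ∈ Finset.range (n+1), (-((k:ℝ)+1)) * C n k * L^(k+2) := by
  obtain ⟨m, rfl⟩ := Nat.exists_eq_add_of_le hn
  set n := 1 + m with hnm
  have hC0 : C n 0 = 0 := by
    rw [hnm, Nat.add_comm]; exact C_succ_zero m
  rw [Finset.sum_range_succ']
  have hC0' : C (n+1) 0 * L ^ (0+1) = 0 := by simp [C_succ_zero]
  rw [hC0', add_zero]
  have step1 : ∀ k ∈ Finset.range (n+1),
      C (n+1) (k+1) * L^(k+1+1)
        = (-((k:ℝ)+1)) * C n k * L^(k+2) + (-(n:ℝ)) * C n (k+1) * L^(k+2) := by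
    intro k _
    rw [C_succ_succ]; ring
  rw [Finset.sum_congr rfl step1, Finset.sum_add_distrib, add_comm]
  congr 1
  -- ∑_{k<n+1} -(n) C n (k+1) L^{k+2} = ∑_{k<n+1} -(n) C n k L^{k+1}
  rw [Finset.sum_range_succ' (fun k => (-(n:ℝ)) * C n k * L^(k+1)) n]
  rw [Finset.sum_range_succ]
  simp [hC0, C_of_lt n (n+1) (by omega)]

lemma log_ne (x : ℝ) (hx : 0 < x) (hx1 : x ≠ 1) : Real.log x ≠ 0 := by
  intro h
  rcases Real.log_eq_zero.mp h with h | h | h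
  · exact hx.ne' h
  · exact hx1 h
  · nlinarith

lemma key : ∀ n : ℕ, 1 ≤ n → ∀ x : ℝ, 0 < x → x ≠ 1 →
    iteratedDeriv n (fun y : ℝ => 1 / Real.log y) x
      = (x^n)⁻¹ * ∑ k ∈ Finset.range (n+1), C n k * (Real.log x)⁻¹ ^ (k+1) := by
  intro n hn
  induction n, hn using Nat.le_induction with
  | base =>
    intro x hx hx1
    have hlx := log_ne x hx hx1
    rw [iteratedDeriv_one]
    have h : HasDerivAt (fun y : ℝ => 1 / Real.log y) (-(x⁻¹) / (Real.log x)^2) x := by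
      simpa [one_div] using (Real.hasDerivAt_log hx.ne').fun_inv hlx
    rw [h.deriv]
    rw [Finset.sum_range_succ, Finset.sum_range_succ, Finset.sum_range_zero]
    have h1 : C 1 0 = 0 := C_succ_zero 0
    have h2 : C 1 1 = -1 := by norm_num [C, stirling1]
    rw [h1, h2]
    field_simp
    simp [hlx]
  | succ n hn ih =>
    intro x hx hx1
    have hlx := log_ne x hx hx1
    have hopen : IsOpen {y : ℝ | 0 < y ∧ y ≠ 1} := by
      have : {y : ℝ | 0 < y ∧ y ≠ 1} = Set.Ioi (0:ℝ) ∩ {(1:ℝ)}ᶜ := by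
        ext y; simp [Set.mem_Ioi]
      rw [this]; exact isOpen_Ioi.inter isClosed_singleton.isOpen_compl
    have hmem : {y : ℝ | 0 < y ∧ y ≠ 1} ∈ nhds x := hopen.mem_nhds ⟨hx, hx1⟩
    have heq : iteratedDeriv n (fun y : ℝ => 1 / Real.log y)
        =ᶠ[nhds x] (fun y => (y^n)⁻¹ * ∑ k ∈ Finset.range (n+1),
          C n k * (Real.log y)⁻¹ ^ (k+1)) :=
      Filter.eventuallyEq_of_mem hmem (fun y hy => ih y hy.1 hy.2)
    rw [iteratedDeriv_succ, heq.deriv_eq]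
    have hL : HasDerivAt (fun y : ℝ => (Real.log y)⁻¹) (-(x⁻¹) / Real.log x ^ 2) x := by
      simpa using (Real.hasDerivAt_log hx.ne').fun_inv hlx
    have hterm : ∀ k ∈ Finset.range (n+1),
        HasDerivAt (fun y : ℝ => C n k * (Real.log y)⁻¹ ^ (k+1))
          (C n k * (((k:ℝ)+1) * (Real.log x)⁻¹ ^ k * (-(x⁻¹) / Real.log x ^ 2))) x := by
      intro k _
      have := (hL.pow (k+1)).const_mul (C n k)
      simpa [Nat.succ_sub_one] using this
    have hsum := HasDerivAt.fun_sum hterm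
    have hpow : HasDerivAt (fun y : ℝ => (y^n)⁻¹) (-(↑n * x^(n-1)) / (x^n)^2) x :=
      (hasDerivAt_pow n x).inv (pow_ne_zero n hx.ne')
    have hF := hpow.fun_mul hsum
    rw [hF.deriv, sum_id n hn (Real.log x)⁻¹, mul_add]
    obtain ⟨m, rfl⟩ : ∃ m, n = m + 1 := ⟨n - 1, by omega⟩
    congr 1
    · rw [Finset.mul_sum, Finset.mul_sum]
      refine Finset.sum_congr rfl fun k _ => ?_
      have hx0 : x ≠ 0 := hx.ne'
      simp only [Nat.add_sub_cancel]
      field_simp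
      ring
    · rw [Finset.mul_sum, Finset.mul_sum]
      refine Finset.sum_congr rfl fun k _ => ?_
      have hx0 : x ≠ 0 := hx.ne'
      field_simp
      have hl2 : Real.log x ^ 2 * (Real.log x)⁻¹ ^ 2 = 1 := by rw [← mul_pow, mul_inv_cancel₀ hlx, one_pow]
      linear_combination (C (m + 1) k * (Real.log x)⁻¹ ^ k * x ^ 2 * x ^ m) * hl2

/-- For every positive integer `n` and every real `x > 0` with `x ≠ 1`, the `n`-th
derivative of `x ↦ 1/ln x` is
`(1/ln x)^{(n)} = (1/x^n) Σ_{k=1}^{n} (-1)^k k! s(n,k) (1/ln x)^{k+1}`. -/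
theorem iteratedDeriv_one_div_log (n : ℕ) (hn : 1 ≤ n) (x : ℝ) (hx : 0 < x) (hx1 : x ≠ 1) :
    iteratedDeriv n (fun y : ℝ => 1 / Real.log y) x =
      (1 / x ^ n) * ∑ k ∈ Finset.Icc 1 n,
        (-1 : ℝ) ^ k * (Nat.factorial k : ℝ) * (stirling1 n k : ℝ) *
          (1 / Real.log x) ^ (k + 1) := by
  rw [key n hn x hx hx1]
  obtain ⟨m, rfl⟩ : ∃ m, n = m + 1 := ⟨n - 1, by omega⟩
  have hins : Finset.range (m+1+1) = insert 0 (Finset.Icc 1 (m+1)) := by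
    ext k; simp [Finset.mem_Icc]; omega
  rw [hins, Finset.sum_insert (by simp), C_succ_zero, zero_mul, zero_add, one_div, one_div]
  congr 1
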